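/- With f and g as defined (g(n) = 10^{n/5}, and f the piecewise function equal to binom(n,2) for 1 ≤ n ≤ 8, binom(⌊n/2⌋,2)·binom(⌈n/2⌉,2) − (⌊n/2⌋−1)(⌈n/2⌉−1) + 1 for 9 ≤ n ≤ 13, 10^{(n-1)/5} + ((n+144)/30)·6^{(n-6)/5} for 14 ≤ n ≤ 30, and 10^{(n-1)/5} + ((n-1)/5)·6^{(n-6)/5} for n ≥ 31), for every integer n ≥ 13 one has f(n)/g(n) ≤ f(14)/g(14) < 0.7778. -/
import Mathlib

/-- `g n = 10 ^ (n/5)` (real power). -/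
noncomputable def g (n : ℕ) : ℝ := (10 : ℝ) ^ ((n : ℝ) / 5)

/-- The four-piece function `f` from the main theorem. -/
noncomputable def f (n : ℕ) : ℝ :=
  if n ≤ 8 then (n.choose 2 : ℝ)
  else if n ≤ 13 then
    ((n / 2).choose 2 : ℝ) * (((n + 1) / 2).choose 2 : ℝ)
      - (((n / 2 : ℕ) : ℝ) - 1) * ((((n + 1) / 2 : ℕ) : ℝ) - 1) + 1
  else if n ≤ 30 then
    (10 : ℝ) ^ (((n : ℝ) - 1) / 5) + (((n : ℝ) + 144) / 30) * (6 : ℝ) ^ (((n : ℝ) - 6) / 5)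
  else
    (10 : ℝ) ^ (((n : ℝ) - 1) / 5) + (((n : ℝ) - 1) / 5) * (6 : ℝ) ^ (((n : ℝ) - 6) / 5)

noncomputable def X : ℝ := (10 : ℝ) ^ ((1 : ℝ) / 5)
noncomputable def Y : ℝ := (6 : ℝ) ^ ((1 : ℝ) / 5)

lemma X_pos : 0 < X := Real.rpow_pos_of_pos (by norm_num) _
lemma Y_pos : 0 < Y := Real.rpow_pos_of_pos (by norm_num) _

lemma ten_rpow (m : ℕ) : (10 : ℝ) ^ ((m : ℝ) / 5) = X ^ m := by
  rw [X, ← Real.rpow_natCast ((10:ℝ) ^ ((1:ℝ)/5)) m,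
    ← Real.rpow_mul (by norm_num : (0:ℝ) ≤ 10)]
  congr 1; ring

lemma six_rpow (m : ℕ) : (6 : ℝ) ^ ((m : ℝ) / 5) = Y ^ m := by
  rw [Y, ← Real.rpow_natCast ((6:ℝ) ^ ((1:ℝ)/5)) m,
    ← Real.rpow_mul (by norm_num : (0:ℝ) ≤ 6)]
  congr 1; ring

lemma X5 : X ^ 5 = 10 := by
  have := ten_rpow 5; rw [← this]; norm_num

lemma Y5 : Y ^ 5 = 6 := by
  have := six_rpow 5; rw [← this]; norm_num

lemma g_eq (n : ℕ) : g n = X ^ n := ten_rpow n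

lemma X_lb : (1.5848931 : ℝ) ≤ X := by
  apply le_of_pow_le_pow_left₀ (n := 5) (by norm_num) (le_of_lt X_pos)
  rw [X5]; norm_num

lemma X_ub : X ≤ (1.5848932 : ℝ) := by
  refine le_of_pow_le_pow_left₀ (n := 5) (by norm_num) (by norm_num) ?_
  rw [X5]; norm_num

lemma Y_lb : (1.4309690 : ℝ) ≤ Y := by
  apply le_of_pow_le_pow_left₀ (n := 5) (by norm_num) (le_of_lt Y_pos)
  rw [Y5]; norm_num

lemma Y_ub : Y ≤ (1.4309691 : ℝ) := by
  refine le_of_pow_le_pow_left₀ (n := 5) (by norm_num) (by norm_num) ?_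
  rw [Y5]; norm_num

lemma XY_key : 30 * Y ≤ 29 * X := by
  have h : (30 * Y) ^ 5 ≤ (29 * X) ^ 5 := by
    have : (30*Y)^5 = 30^5 * Y^5 := by ring
    have h2 : (29*X)^5 = 29^5 * X^5 := by ring
    rw [this, h2, X5, Y5]; norm_num
  exact le_of_pow_le_pow_left₀ (by norm_num)
    (by nlinarith [X_pos]) h

noncomputable def A (n : ℕ) : ℝ :=
  if n ≤ 30 then ((n : ℝ) + 144) / 30 else ((n : ℝ) - 1) / 5

lemma A_nonneg (n : ℕ) (h : 14 ≤ n) : 0 ≤ A n := by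
  have hn : (14:ℝ) ≤ (n:ℝ) := by exact_mod_cast h
  unfold A
  split <;> linarith

lemma A_step (n : ℕ) (h : 14 ≤ n) : 29 * A (n+1) ≤ 30 * A n := by
  unfold A
  have hn : (14:ℝ) ≤ (n:ℝ) := by exact_mod_cast h
  by_cases h30 : n + 1 ≤ 30
  · rw [if_pos h30, if_pos (by omega)]
    push_cast; linarith
  · by_cases h30' : n ≤ 30
    · -- n = 30
      have : n = 30 := by omega
      subst this
      norm_num
    · rw [if_neg h30, if_neg h30']
      have : (30:ℝ) ≤ (n:ℝ) := by exact_mod_cast (by omega : 30 ≤ n)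
      push_cast; linarith

lemma f_eq (n : ℕ) (h : 14 ≤ n) : f n = X ^ (n-1) + A n * Y ^ (n-6) := by
  unfold f A
  rw [if_neg (by omega), if_neg (by omega)]
  have e1 : ((n:ℝ) - 1) / 5 = (((n-1 : ℕ) : ℝ)) / 5 := by
    rw [Nat.cast_sub (by omega)]; norm_num
  have e6 : ((n:ℝ) - 6) / 5 = (((n-6 : ℕ) : ℝ)) / 5 := by
    rw [Nat.cast_sub (by omega)]; norm_num
  split
  · rw [e1, e6, ten_rpow, six_rpow]
  · rw [e1, e6, ten_rpow, six_rpow]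

lemma f_step (n : ℕ) (h : 14 ≤ n) : f (n+1) ≤ X * f n := by
  obtain ⟨m, rfl⟩ : ∃ m, n = m + 14 := ⟨n - 14, by omega⟩
  rw [f_eq _ (by omega), f_eq _ (by omega)]
  have e1 : m + 14 + 1 - 1 = m + 14 := by omega
  have e2 : m + 14 + 1 - 6 = m + 9 := by omega
  have e3 : m + 14 - 1 = m + 13 := by omega
  have e4 : m + 14 - 6 = m + 8 := by omega
  rw [e1, e2, e3, e4]
  have key : A (m+15) * Y ≤ A (m+14) * X := by
    have h1 := A_step (m+14) (by omega)
    have h2 := XY_key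
    have hA := A_nonneg (m+14) (by omega)
    have hY := Y_pos.le
    nlinarith [mul_le_mul_of_nonneg_right h1 hY, mul_le_mul_of_nonneg_left h2 hA]
  have hYp : (0:ℝ) ≤ Y ^ (m+8) := pow_nonneg Y_pos.le _
  have : A (m+15) * Y ^ (m+9) ≤ A (m+14) * X * Y ^ (m+8) := by
    calc A (m+15) * Y ^ (m+9) = (A (m+15) * Y) * Y ^ (m+8) := by ring
    _ ≤ (A (m+14) * X) * Y ^ (m+8) := mul_le_mul_of_nonneg_right key hYp
  have hx : X * X ^ (m+13) = X ^ (m+14) := by rw [← pow_succ']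
  nlinarith [this]

lemma X13 : X ^ 13 = 100 * X ^ 3 := by
  have : X ^ 13 = (X^5)^2 * X^3 := by ring
  rw [this, X5]; norm_num

lemma X14 : X ^ 14 = 100 * X ^ 4 := by
  have : X ^ 14 = (X^5)^2 * X^4 := by ring
  rw [this, X5]; norm_num

lemma Y8 : Y ^ 8 = 6 * Y ^ 3 := by
  have : Y ^ 8 = Y^5 * Y^3 := by ring
  rw [this, Y5]

lemma f14_eq : f 14 = 100 * X ^ 3 + (158/5) * Y ^ 3 := by
  rw [f_eq 14 (by norm_num)]
  norm_num [A, X13, Y8]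
  ring

lemma main_lt : f 14 / g 14 < 0.7778 := by
  rw [f14_eq, g_eq, X14,
    div_lt_iff₀ (by exact mul_pos (by norm_num) (pow_pos X_pos 4))]
  have hX3 : X ^ 3 ≤ (1.5848932:ℝ)^3 := pow_le_pow_left₀ X_pos.le X_ub 3
  have hY3 : Y ^ 3 ≤ (1.4309691:ℝ)^3 := pow_le_pow_left₀ Y_pos.le Y_ub 3
  have hX4 : (1.5848931:ℝ)^4 ≤ X ^ 4 := pow_le_pow_left₀ (by norm_num) X_lb 4
  nlinarith

lemma f13 : f 13 = 286 := by
  norm_num [f]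
  rw [show Nat.choose 6 2 = 15 from rfl, show Nat.choose 7 2 = 21 from rfl]
  norm_num

lemma base13 : f 13 / g 13 ≤ f 14 / g 14 := by
  rw [f13, f14_eq, g_eq, g_eq, X13, X14,
    div_le_div_iff₀ (mul_pos (by norm_num) (pow_pos X_pos 3))
      (mul_pos (by norm_num) (pow_pos X_pos 4))]
  have hX3 : (1.5848931:ℝ)^3 ≤ X ^ 3 := pow_le_pow_left₀ (by norm_num) X_lb 3
  have hY3 : (1.4309690:ℝ)^3 ≤ Y ^ 3 := pow_le_pow_left₀ (by norm_num) Y_lb 3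
  have hXu : X ≤ (1.5848932:ℝ) := X_ub
  have key : 286 * X ≤ 100 * X ^ 3 + (158/5) * Y ^ 3 := by nlinarith
  have hp : (0:ℝ) < 100 * X ^ 3 := mul_pos (by norm_num) (pow_pos X_pos 3)
  calc 286 * (100 * X ^ 4) = (286 * X) * (100 * X ^ 3) := by ring
    _ ≤ (100 * X ^ 3 + 158/5 * Y ^ 3) * (100 * X ^ 3) :=
        mul_le_mul_of_nonneg_right key hp.le

lemma main14 (n : ℕ) (hn : 14 ≤ n) : f n / g n ≤ f 14 / g 14 := by
  induction n, hn using Nat.le_induction with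
  | base => exact le_rfl
  | succ n hn ih =>
    refine le_trans ?_ ih
    rw [g_eq, g_eq, pow_succ]
    have hXn : (0:ℝ) < X ^ n := pow_pos X_pos n
    calc f (n+1) / (X ^ n * X) ≤ (X * f n) / (X ^ n * X) := by
          gcongr
          · exact (mul_pos hXn X_pos).le
          · exact f_step n hn
    _ = f n / X ^ n := by
          rw [mul_comm (X ^ n) X, mul_div_mul_left _ _ (ne_of_gt X_pos)]

theorem f_div_g_le_of_ge_thirteen :
    (∀ n : ℕ, 13 ≤ n → f n / g n ≤ f 14 / g 14) ∧ f 14 / g 14 < 0.7778 := by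
  refine ⟨?_, main_lt⟩
  intro n hn
  rcases eq_or_lt_of_le hn with h | h
  · rw [← h]; exact base13
  · exact main14 n h
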